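/- Let X be a regular (T₃) Hausdorff space and Y ⊆ X. Suppose the closure of Y in X has cardinality strictly less than the pseudo-intersection number 𝔭, and that no countably infinite subset of Y is closed and discrete in X. Then there exists a countably compact subspace Y' of X containing Y. -/

import Mathlib

open Filter Topology Set Cardinal

universe u

/-- The pseudo-intersection number 𝔭: the least cardinality of a family of infinite
subsets of ℕ with the strong finite intersection property but no infinite
pseudo-intersection. -/
noncomputable def pseudoIntersectionNumber : Cardinal.{0} :=
  sInf {c | ∃ F : Set (Set ℕ), #F = c ∧ (∀ A ∈ F, A.Infinite) ∧
    (∀ G : Finset (Set ℕ), ↑G ⊆ F → (⋂₀ (G : Set (Set ℕ))).Infinite) ∧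
    ¬ ∃ A : Set ℕ, A.Infinite ∧ ∀ B ∈ F, (A \ B).Finite}

lemma aux_countable_pi (F : Set (Set ℕ)) (hF : F.Countable)
    (hsfip : ∀ G : Finset (Set ℕ), ↑G ⊆ F → (⋂₀ (G : Set (Set ℕ))).Infinite) :
    ∃ A : Set ℕ, A.Infinite ∧ ∀ B ∈ F, (A \ B).Finite := by
  classical
  rcases F.eq_empty_or_nonempty with rfl | hne
  · exact ⟨Set.univ, Set.infinite_univ, by simp⟩
  obtain ⟨f, rfl⟩ := hF.exists_eq_range hne
  have hg : ∀ n : ℕ, (⋂ i ∈ Finset.range (n + 1), f i).Infinite := by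
    intro n
    have h1 : ↑((Finset.range (n + 1)).image f) ⊆ Set.range f := by
      intro B hB
      simp only [Finset.coe_image, Set.mem_image] at hB
      obtain ⟨i, _, rfl⟩ := hB
      exact Set.mem_range_self i
    have h2 := hsfip ((Finset.range (n + 1)).image f) h1
    have h3 : (⋂₀ (((Finset.range (n + 1)).image f : Finset (Set ℕ)) : Set (Set ℕ)))
        = ⋂ i ∈ Finset.range (n + 1), f i := by
      rw [Finset.coe_image, Set.sInter_image]
      simp
    rwa [h3] at h2
  have hstep : ∀ n (x : ℕ), ∃ y, y ∈ (⋂ i ∈ Finset.range (n + 1), f i) ∧ x < y := by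
    intro n x
    obtain ⟨y, hy, hxy⟩ := (hg n).exists_gt x
    exact ⟨y, hy, hxy⟩
  choose pick hpick hlt using hstep
  let a : ℕ → ℕ := fun n => Nat.rec (pick 0 0) (fun n ih => pick (n + 1) ih) n
  have haS : ∀ n, a (n + 1) = pick (n + 1) (a n) := fun n => rfl
  have hmono : StrictMono a := strictMono_nat_of_lt_succ (fun n => by
    rw [haS]; exact hlt (n + 1) (a n))
  have hamem : ∀ n, a n ∈ ⋂ i ∈ Finset.range (n + 1), f i := by
    intro n
    cases n with
    | zero => exact hpick 0 0
    | succ n => rw [haS]; exact hpick (n + 1) (a n)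
  have haf : ∀ {j n : ℕ}, j ≤ n → a n ∈ f j := by
    intro j n hjn
    have := hamem n
    simp only [Set.mem_iInter, Finset.mem_range] at this
    exact this j (Nat.lt_succ_of_le hjn)
  refine ⟨Set.range a, Set.infinite_range_of_injective hmono.injective, ?_⟩
  rintro B ⟨j, rfl⟩
  have hsub : Set.range a \ f j ⊆ a '' (Set.Iio j) := by
    rintro x ⟨⟨n, rfl⟩, hnf⟩
    refine ⟨n, ?_, rfl⟩
    by_contra h
    exact hnf (haf (Nat.le_of_not_lt h))
  exact ((Set.finite_Iio j).image a).subset hsub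

/-- Let `X` be a regular (T₃) Hausdorff space and `Y ⊆ X`. If the closure of `Y` has
cardinality `< 𝔭` and no countably infinite subset of `Y` is closed and discrete in `X`,
then there is a countably compact subspace `Y'` of `X` containing `Y`. -/
theorem exists_countablyCompact_superset {X : Type u} [TopologicalSpace X] [T3Space X]
    (Y : Set X)
    (hcard : #(closure Y) < Cardinal.lift.{u} pseudoIntersectionNumber)
    (hnd : ∀ Z ⊆ Y, Z.Countable → Z.Infinite → ¬ (IsClosed Z ∧ DiscreteTopology Z)) :
    ∃ Y' : Set X, Y ⊆ Y' ∧
      ∀ Z ⊆ Y', Z.Countable → Z.Infinite → ∃ x ∈ Y', AccPt x (𝓟 Z) := by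
  classical
  set Y' : Set X := Y ∪ {x | ∃ C ⊆ Y, C.Countable ∧ AccPt x (𝓟 C)} with hY'def
  have happrox : ∀ x ∈ Y', ∃ D ⊆ Y, D.Countable ∧ x ∈ closure D := by
    rintro x (hx | ⟨C, hCY, hCc, haccC⟩)
    · exact ⟨{x}, Set.singleton_subset_iff.2 hx, Set.countable_singleton x,
        subset_closure rfl⟩
    · refine ⟨C, hCY, hCc, ?_⟩
      rw [mem_closure_iff_nhds]
      intro U hU
      obtain ⟨y, hy, -⟩ := accPt_iff_nhds.1 haccC U hU
      exact ⟨y, hy⟩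
  have hY'K : Y' ⊆ closure Y := by
    intro x hx
    obtain ⟨D, hDY, -, hDcl⟩ := happrox x hx
    exact closure_mono hDY hDcl
  refine ⟨Y', Set.subset_union_left, ?_⟩
  intro Z hZY' hZc hZi
  by_cases haccZ : ∃ x, AccPt x (𝓟 Z)
  · obtain ⟨x, hx⟩ := haccZ
    refine ⟨x, ?_, hx⟩
    right
    haveI : Countable ↥Z := hZc.to_subtype
    choose D hDY hDc hDcl using fun z : Z => happrox (z : X) (hZY' z.2)
    refine ⟨⋃ z : Z, D z, Set.iUnion_subset hDY, Set.countable_iUnion hDc, ?_⟩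
    rw [accPt_iff_nhds]
    intro U hU
    obtain ⟨p, hpU, hpx⟩ := accPt_iff_nhds.1 hx (interior U)
      (interior_mem_nhds.2 hU)
    have hVopen : IsOpen (interior U ∩ {x}ᶜ) :=
      isOpen_interior.inter (isClosed_singleton).isOpen_compl
    have hpV : p ∈ interior U ∩ {x}ᶜ := ⟨hpU.1, hpx⟩
    obtain ⟨q, hq⟩ := mem_closure_iff_nhds.1 (hDcl ⟨p, hpU.2⟩)
      (interior U ∩ {x}ᶜ) (hVopen.mem_nhds hpV)
    exact ⟨q, ⟨interior_subset hq.1.1, Set.mem_iUnion.2 ⟨⟨p, hpU.2⟩, hq.2⟩⟩, hq.1.2⟩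
  · exfalso
    have hnacc : ∀ x, ¬ AccPt x (𝓟 Z) := not_exists.1 haccZ
    have hZK : Z ⊆ closure Y := fun z hz => hY'K (hZY' hz)
    have hZcl : IsClosed Z := by
      rw [← closure_subset_iff_isClosed]
      intro x hx
      by_contra hxZ
      apply hnacc x
      rw [accPt_iff_nhds]
      intro U hU
      obtain ⟨y, hy⟩ := mem_closure_iff_nhds.1 hx U hU
      exact ⟨y, hy, fun h => hxZ (h ▸ hy.2)⟩
    have hdiffcl : ∀ x : X, IsClosed (Z \ {x}) := by
      intro x
      rw [← closure_subset_iff_isClosed]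
      intro p hp
      have hpZ : p ∈ Z := hZcl.closure_subset ((closure_mono Set.diff_subset) hp)
      refine ⟨hpZ, ?_⟩
      intro hpx
      rw [Set.mem_singleton_iff] at hpx
      subst hpx
      apply hnacc p
      rw [accPt_iff_nhds]
      intro U hU
      obtain ⟨y, hy⟩ := mem_closure_iff_nhds.1 hp U hU
      exact ⟨y, ⟨hy.1, hy.2.1⟩, hy.2.2⟩
    -- injective sequence in Z
    let e : ℕ ↪ ↥Z := hZi.natEmbedding
    let z : ℕ → X := fun n => (e n : X)
    have hzZ : ∀ n, z n ∈ Z := fun n => (e n).2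
    have hzinj : Function.Injective z := fun a b h => e.injective (Subtype.ext h)
    -- closed neighborhoods Q n of z n meeting Z only at z n
    have hQ : ∀ n, ∃ Q, Q ∈ 𝓝 (z n) ∧ IsClosed Q ∧ Q ∩ Z ⊆ {z n} := by
      intro n
      have h0 : z n ∉ Z \ {z n} := fun h => h.2 rfl
      have h1 : (Z \ {z n})ᶜ ∈ 𝓝 (z n) := (hdiffcl (z n)).isOpen_compl.mem_nhds h0
      obtain ⟨Q, hQn, hQcl, hQsub⟩ := exists_mem_nhds_isClosed_subset h1
      refine ⟨Q, hQn, hQcl, ?_⟩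
      rintro p ⟨hpQ, hpZ⟩
      by_contra hne
      exact (hQsub hpQ) ⟨hpZ, hne⟩
    choose Q hQn hQcl hQZ using hQ
    -- closed neighborhoods W x meeting Z only at x
    have hWex : ∀ x : X, ∃ W, W ∈ 𝓝 x ∧ IsClosed W ∧ W ∩ Z ⊆ {x} := by
      intro x
      have h0 : x ∉ Z \ {x} := fun h => h.2 rfl
      have h1 : (Z \ {x})ᶜ ∈ 𝓝 x := (hdiffcl x).isOpen_compl.mem_nhds h0
      obtain ⟨W, hWn, hWcl, hWsub⟩ := exists_mem_nhds_isClosed_subset h1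
      refine ⟨W, hWn, hWcl, ?_⟩
      rintro p ⟨hpW, hpZ⟩
      by_contra hne
      exact (hWsub hpW) ⟨hpZ, hne⟩
    choose W hWn hWcl hWZ using hWex
    -- pairwise disjoint open V n around z n
    let V : ℕ → Set X := fun n => interior (Q n) \ ⋃ m ∈ Finset.range n, Q m
    have hVopen : ∀ n, IsOpen (V n) := fun n =>
      isOpen_interior.sdiff ((Finset.range n).finite_toSet.isClosed_biUnion
        (fun m _ => hQcl m))
    have hzV : ∀ n, z n ∈ V n := by
      intro n
      refine ⟨mem_interior_iff_mem_nhds.2 (hQn n), ?_⟩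
      intro hmem
      simp only [Set.mem_iUnion, Finset.mem_range] at hmem
      obtain ⟨m, hmn, hQm⟩ := hmem
      have : z n = z m := hQZ m ⟨hQm, hzZ n⟩
      exact absurd (hzinj this) (Nat.ne_of_gt hmn)
    have hVdisj : ∀ {m n : ℕ} {p : X}, p ∈ V m → p ∈ V n → m = n := by
      intro m n p hm hn
      by_contra hne
      rcases Nat.lt_or_ge m n with h | h
      · exact hn.2 (Set.mem_biUnion (Finset.mem_range.2 h) (interior_subset hm.1))
      · have h' : n < m := lt_of_le_of_ne h (Ne.symm hne)
        exact hm.2 (Set.mem_biUnion (Finset.mem_range.2 h') (interior_subset hn.1))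
    -- countable approach sets D n ⊆ Y with z n ∈ closure (D n)
    choose D hDY hDc hDcl using fun n => happrox (z n) (hZY' (hzZ n))
    have hDne : ∀ n, (D n).Nonempty := by
      intro n
      rcases (D n).eq_empty_or_nonempty with h | h
      · have h' := hDcl n
        rw [h] at h'
        simp at h'
      · exact h
    have hdex : ∀ n, ∃ d : ℕ → X, D n = Set.range d :=
      fun n => (hDc n).exists_eq_range (hDne n)
    choose d hd using hdex
    -- the family of subsets of ℕ
    let A : X → Set ℕ := fun x => {i | d (Nat.unpair i).1 (Nat.unpair i).2 ∈ V (Nat.unpair i).1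
      ∧ d (Nat.unpair i).1 (Nat.unpair i).2 ∉ W x}
    let E : ℕ → Set ℕ := fun m => {i | m ≤ (Nat.unpair i).1}
    let F : Set (Set ℕ) := (Set.range fun x : ↥(closure Y) => A ↑x) ∪ Set.range E
    -- SFIP
    have hSFIP : ∀ G : Finset (Set ℕ), ↑G ⊆ F → (⋂₀ (G : Set (Set ℕ))).Infinite := by
      intro G hG
      have hsuff : ∀ j : ℕ, ∃ i ∈ ⋂₀ (G : Set (Set ℕ)), j ≤ (Nat.unpair i).1 := by
        intro j
        set wx : Set ℕ → X := fun B =>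
          if h : ∃ x : ↥(closure Y), B = A ↑x then ↑h.choose else z 0 with hwx
        set wm : Set ℕ → ℕ := fun B => if h : ∃ m, B = E m then h.choose else 0 with hwm
        have hcases : ∀ B ∈ G, B = A (wx B) ∨ B = E (wm B) := by
          intro B hB
          rcases hG hB with ⟨x, hx⟩ | ⟨m, hm⟩
          · left
            have h : ∃ x : ↥(closure Y), B = A ↑x := ⟨x, hx.symm⟩
            simp only [hwx, dif_pos h]
            exact h.choose_spec
          · by_cases h' : ∃ x : ↥(closure Y), B = A ↑x
            · left
              simp only [hwx, dif_pos h']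
              exact h'.choose_spec
            · right
              have h : ∃ m', B = E m' := ⟨m, hm.symm⟩
              simp only [hwm, dif_pos h]
              exact h.choose_spec
        -- find a good n
        have hbadfin : (z ⁻¹' ((G.image wx : Finset X) : Set X)).Finite :=
          Set.Finite.preimage (Set.injOn_of_injective hzinj)
            (G.image wx).finite_toSet
        have hcofin : (z ⁻¹' ((G.image wx : Finset X) : Set X))ᶜ.Infinite :=
          hbadfin.infinite_compl
        obtain ⟨n, hn, hngt⟩ := hcofin.exists_gt (max j (G.sup wm))
        have hnj : j ≤ n := le_trans (le_max_left _ _) (le_of_lt hngt)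
        have hnm : G.sup wm ≤ n := le_trans (le_max_right _ _) (le_of_lt hngt)
        have hnbad : z n ∉ ((G.image wx : Finset X) : Set X) := hn
        -- the open set U around z n
        set U : Set X := V n \ ⋃ B ∈ G, W (wx B) with hU
        have hUopen : IsOpen U := (hVopen n).sdiff
          (G.finite_toSet.isClosed_biUnion (fun B _ => hWcl (wx B)))
        have hzU : z n ∈ U := by
          refine ⟨hzV n, ?_⟩
          intro hmem
          simp only [Set.mem_iUnion] at hmem
          obtain ⟨B, hB, hzW⟩ := hmem
          have : z n = wx B := hWZ (wx B) ⟨hzW, hzZ n⟩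
          exact hnbad (by
            simp only [Finset.coe_image, Set.mem_image]
            exact ⟨B, hB, this.symm⟩)
        obtain ⟨c, hcU, hcD⟩ := mem_closure_iff_nhds.1 (hDcl n) U (hUopen.mem_nhds hzU)
        obtain ⟨k, hk⟩ : ∃ k, d n k = c := by
          have := hcD
          rw [hd n] at this
          exact this
        refine ⟨Nat.pair n k, ?_, by rw [Nat.unpair_pair]; exact hnj⟩
        intro B hB
        rcases hcases B hB with h | h
        · rw [h]
          show d (Nat.unpair (Nat.pair n k)).1 (Nat.unpair (Nat.pair n k)).2 ∈ _ ∧ _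
          rw [Nat.unpair_pair]
          refine ⟨by rw [hk]; exact hcU.1, ?_⟩
          rw [hk]
          intro hcW
          exact hcU.2 (Set.mem_biUnion hB hcW)
        · rw [h]
          show wm B ≤ (Nat.unpair (Nat.pair n k)).1
          rw [Nat.unpair_pair]
          exact le_trans (Finset.le_sup hB) hnm
      -- conclude infinite from unbounded first coordinates
      intro hfin
      have himg : ((fun i => (Nat.unpair i).1) '' ⋂₀ (G : Set (Set ℕ))).Finite :=
        hfin.image _
      obtain ⟨b, hb⟩ := himg.bddAbove
      obtain ⟨i, hi, hij⟩ := hsuff (b + 1)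
      have : (Nat.unpair i).1 ≤ b := hb ⟨i, hi, rfl⟩
      omega
    have hinf : ∀ B ∈ F, B.Infinite := by
      intro B hB
      have h1 : (↑({B} : Finset (Set ℕ)) : Set (Set ℕ)) ⊆ F := by simpa using hB
      have := hSFIP {B} h1
      simpa using this
    -- F has a pseudo-intersection
    have hPI : ∃ P : Set ℕ, P.Infinite ∧ ∀ B ∈ F, (P \ B).Finite := by
      by_contra hnoPI
      have hmem : #↥F ∈ {c | ∃ F : Set (Set ℕ), #F = c ∧ (∀ A ∈ F, A.Infinite) ∧
          (∀ G : Finset (Set ℕ), ↑G ⊆ F → (⋂₀ (G : Set (Set ℕ))).Infinite) ∧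
          ¬ ∃ A : Set ℕ, A.Infinite ∧ ∀ B ∈ F, (A \ B).Finite} :=
        ⟨F, rfl, hinf, hSFIP, hnoPI⟩
      have hple : pseudoIntersectionNumber ≤ #↥F := csInf_le' hmem
      have haleph : ℵ₀ < pseudoIntersectionNumber := by
        have hmem' := csInf_mem (Set.nonempty_of_mem hmem)
        obtain ⟨F₀, hF₀card, hF₀inf, hF₀sfip, hF₀noPI⟩ := hmem'
        by_contra hle
        push_neg at hle
        rw [show sInf _ = pseudoIntersectionNumber from rfl] at hF₀card
        rw [← hF₀card] at hle
        haveI : Countable ↥F₀ := Cardinal.mk_le_aleph0_iff.1 hle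
        exact hF₀noPI (aux_countable_pi F₀ (Set.countable_coe_iff.1 this) hF₀sfip)
      have h1 : Cardinal.lift.{u} #↥F ≤ #↥(closure Y) + ℵ₀ := by
        calc Cardinal.lift.{u} #↥F
            ≤ Cardinal.lift.{u} (#↥(Set.range fun x : ↥(closure Y) => A ↑x)
                + #↥(Set.range E)) := lift_le.2 (mk_union_le _ _)
          _ = Cardinal.lift.{u} #↥(Set.range fun x : ↥(closure Y) => A ↑x)
                + Cardinal.lift.{u} #↥(Set.range E) := by rw [lift_add]
          _ ≤ #↥(closure Y) + ℵ₀ := by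
              refine add_le_add ?_ ?_
              · have := Cardinal.mk_range_le_lift
                  (f := fun x : ↥(closure Y) => A ↑x)
                rwa [Cardinal.lift_uzero] at this
              · calc Cardinal.lift.{u} #↥(Set.range E)
                    ≤ Cardinal.lift.{u} #ℕ := lift_le.2 Cardinal.mk_range_le
                  _ = ℵ₀ := by rw [Cardinal.mk_nat, lift_aleph0]
      have h2 : #↥(closure Y) + ℵ₀ < Cardinal.lift.{u} pseudoIntersectionNumber := by
        refine Cardinal.add_lt_of_lt ?_ hcard ?_
        · rw [← lift_aleph0.{u,0}]
          exact lift_le.2 haleph.le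
        · rw [← lift_aleph0.{u,0}]
          exact lift_lt.2 haleph
      exact absurd (lt_of_le_of_lt (lift_le.2 hple) (lt_of_le_of_lt h1 h2))
        (lt_irrefl _)
    obtain ⟨P, hPinf, hPsub⟩ := hPI
    have hPA : ∀ x ∈ closure Y, (P \ A x).Finite :=
      fun x hx => hPsub (A x) (Or.inl ⟨⟨x, hx⟩, rfl⟩)
    have hPE : ∀ m, (P \ E m).Finite := fun m => hPsub (E m) (Or.inr ⟨m, rfl⟩)
    have hx₀ : z 0 ∈ closure Y := hZK (hzZ 0)
    set P' : Set ℕ := P ∩ A (z 0) with hP'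
    have hP'inf : P'.Infinite := by
      have := hPinf.diff (hPA (z 0) hx₀)
      rwa [Set.diff_diff_right_self] at this
    set y : ℕ → X := fun i => d (Nat.unpair i).1 (Nat.unpair i).2 with hy
    set Z' : Set X := y '' P' with hZ'
    have hyV : ∀ i ∈ P', y i ∈ V (Nat.unpair i).1 := fun i hi => hi.2.1
    have hZ'Y : Z' ⊆ Y := by
      rintro _ ⟨i, hi, rfl⟩
      apply hDY (Nat.unpair i).1
      rw [hd (Nat.unpair i).1]
      exact Set.mem_range_self _
    have hZ'c : Z'.Countable := (Set.to_countable P').image y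
    have hfstunb : ∀ m, ∃ i ∈ P', m ≤ (Nat.unpair i).1 := by
      intro m
      have hfin : (P' \ E m).Finite :=
        (hPE m).subset (Set.diff_subset_diff_left Set.inter_subset_left)
      obtain ⟨i, hi⟩ := (hP'inf.diff hfin).nonempty
      refine ⟨i, hi.1, ?_⟩
      by_contra hlt
      exact hi.2 ⟨hi.1, hlt⟩
    have hZ'inf : Z'.Infinite := by
      intro hfin
      have himgfin : (⋃ q ∈ Z', {n : ℕ | q ∈ V n}).Finite := by
        refine Set.Finite.biUnion hfin (fun q _ => ?_)
        refine Set.Subsingleton.finite (fun a ha b hb => hVdisj ha hb)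
      have hsub : (fun i => (Nat.unpair i).1) '' P' ⊆ ⋃ q ∈ Z', {n : ℕ | q ∈ V n} := by
        rintro _ ⟨i, hi, rfl⟩
        exact Set.mem_biUnion ⟨i, hi, rfl⟩ (hyV i hi)
      have hval : ((fun i => (Nat.unpair i).1) '' P').Finite := himgfin.subset hsub
      obtain ⟨b, hb⟩ := hval.bddAbove
      obtain ⟨i, hi, hij⟩ := hfstunb (b + 1)
      have : (Nat.unpair i).1 ≤ b := hb ⟨i, hi, rfl⟩
      omega
    have hZ'nacc : ∀ x, ¬ AccPt x (𝓟 Z') := by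
      intro x hx
      have hxK : x ∈ closure Y := by
        have hxZ' : x ∈ closure Z' := by
          rw [mem_closure_iff_nhds]
          intro U hU
          obtain ⟨q, hq, -⟩ := accPt_iff_nhds.1 hx U hU
          exact ⟨q, hq⟩
        exact closure_mono hZ'Y hxZ'
      have hbad : (P' \ A x).Finite :=
        (hPA x hxK).subset (Set.diff_subset_diff_left Set.inter_subset_left)
      set Fbad : Set X := y '' (P' \ A x) with hFbad
      have hFbadfin : Fbad.Finite := hbad.image y
      have hUnhds : (interior (W x) \ (Fbad \ {x})) ∈ 𝓝 x := by
        refine (isOpen_interior.sdiff ((hFbadfin.subset Set.diff_subset).isClosed)).mem_nhds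
          ⟨mem_interior_iff_mem_nhds.2 (hWn x), fun h => h.2 rfl⟩
      obtain ⟨q, hqmem, hqne⟩ := accPt_iff_nhds.1 hx _ hUnhds
      obtain ⟨⟨hqW, hqFbad⟩, hqZ'⟩ := hqmem
      obtain ⟨i, hiP', rfl⟩ := hqZ'
      by_cases hiA : i ∈ A x
      · exact hiA.2 (interior_subset hqW)
      · exact hqFbad ⟨⟨i, ⟨hiP', hiA⟩, rfl⟩, hqne⟩
    have hcd : IsClosed Z' ∧ DiscreteTopology Z' := by
      rw [← isDiscrete_iff_discreteTopology, isClosed_and_discrete_iff]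
      intro x
      rw [disjoint_iff]
      exact Filter.not_neBot.1 (hZ'nacc x)
    exact hnd Z' hZ'Y hZ'c hZ'inf hcd
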